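/- Let 𝒟 = P(X₁) × ⋯ × P(X_s) with finite alphabets X_i and fixed weights α_i > 0, and let 𝒫₀ ⊆ interior(𝒟) be bounded away from the boundary. For P₀ ∈ 𝒫₀ and r ≥ 0 let B_r(P₀) = { Q ∈ 𝒟 : Σ_i α_i D(Q_i‖P₀_i) < r }. Given any bounded λ : 𝒫₀ → (0,∞), define Ω₀ = ⋃_{P₀ ∈ 𝒫₀} B_{λ(P₀)}(P₀) and, assuming Ω₀ ≠ 𝒟, define λ̄(P₀) = sup{ r ≥ 0 : B_r(P₀) ⊆ Ω₀ } for P₀ ∈ closure(𝒫₀). Then λ̄ is continuous on closure(𝒫₀), λ̄|_{𝒫₀} ≥ λ pointwise, and ⋃_{P₀ ∈ 𝒫₀} B_{λ̄(P₀)}(P₀) = Ω₀. -/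

import Mathlib

open scoped BigOperators

/-- KL divergence (base-2 logarithms) between finitely supported distributions. -/
noncomputable def KL {X : Type*} [Fintype X] (P Q : X → ℝ) : ℝ :=
  ∑ x, P x * Real.logb 2 (P x / Q x)

/-- `P` is a probability distribution on the finite alphabet `X`. -/
def IsProb {X : Type*} [Fintype X] (P : X → ℝ) : Prop :=
  (∀ x, 0 ≤ P x) ∧ ∑ x, P x = 1

lemma aux_scalar_cont : ContinuousOn (fun p : ℝ × ℝ => p.1 * Real.logb 2 (p.1 / p.2))
    {p : ℝ × ℝ | p.2 ≠ 0} := by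
  have h : ContinuousOn
      (fun p : ℝ × ℝ => p.2 * ((p.1 / p.2) * Real.log (p.1 / p.2)) / Real.log 2)
      {p : ℝ × ℝ | p.2 ≠ 0} :=
    (continuousOn_snd.mul (Real.continuous_mul_log.comp_continuousOn
      (continuousOn_fst.div continuousOn_snd fun p hp => hp))).div_const _
  refine h.congr fun p hp => ?_
  have hb : p.2 ≠ 0 := hp
  rw [Real.logb]
  field_simp

lemma aux_joint_cont {s : ℕ} (X : Fin s → Type*) [∀ i, Fintype (X i)] (α : Fin s → ℝ) :
    ContinuousOn
      (fun p : (∀ i, X i → ℝ) × (∀ i, X i → ℝ) => ∑ i, α i * KL (p.1 i) (p.2 i))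
      {p | ∀ i x, p.2 i x ≠ 0} := by
  refine continuousOn_finset_sum _ fun i _ => continuousOn_const.mul ?_
  unfold KL
  refine continuousOn_finset_sum _ fun x _ => ?_
  have hcomp : Continuous (fun p : (∀ i, X i → ℝ) × (∀ i, X i → ℝ) => (p.1 i x, p.2 i x)) :=
    ((continuous_apply x).comp ((continuous_apply i).comp continuous_fst)).prodMk
      ((continuous_apply x).comp ((continuous_apply i).comp continuous_snd))
  exact aux_scalar_cont.comp hcomp.continuousOn fun p hp => hp i x

lemma aux_KL_nonneg {X : Type*} [Fintype X] (Q P : X → ℝ) (hQ : IsProb Q) (hP : IsProb P)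
    (hPpos : ∀ x, 0 < P x) : 0 ≤ KL Q P := by
  have key : ∀ x, Q x - P x ≤ Q x * Real.log (Q x / P x) := by
    intro x
    rcases eq_or_lt_of_le (hQ.1 x) with h0 | h0
    · simp [← h0]
      linarith [(hPpos x).le]
    · have h1 : Real.log (P x / Q x) ≤ P x / Q x - 1 :=
        Real.log_le_sub_one_of_pos (div_pos (hPpos x) h0)
      have h2 : Real.log (Q x / P x) = - Real.log (P x / Q x) := by
        rw [Real.log_div (ne_of_gt h0) (ne_of_gt (hPpos x)),
          Real.log_div (ne_of_gt (hPpos x)) (ne_of_gt h0)]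
        ring
      rw [h2]
      have h3 : Q x * (P x / Q x) = P x := by field_simp
      nlinarith
  have hsum : 0 ≤ ∑ x, Q x * Real.log (Q x / P x) := by
    have := Finset.sum_le_sum (s := Finset.univ) (fun x _ => key x)
    have h4 : ∑ x, (Q x - P x) = 0 := by
      rw [Finset.sum_sub_distrib, hQ.2, hP.2]; ring
    linarith [h4 ▸ this]
  have hlog2 : 0 < Real.log 2 := Real.log_pos one_lt_two
  unfold KL
  have : ∑ x, Q x * Real.logb 2 (Q x / P x)
      = (∑ x, Q x * Real.log (Q x / P x)) / Real.log 2 := by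
    rw [Finset.sum_div]
    refine Finset.sum_congr rfl fun x _ => ?_
    rw [Real.logb, mul_div_assoc]
  rw [this]
  positivity

/-- Given a bounded `λ : 𝒫₀ → (0,∞)` on a `𝒫₀` bounded away from the boundary
of the product simplex `𝒟`, with `Ω₀ = ⋃_{P₀} B_{λ(P₀)}(P₀) ≠ 𝒟`, the function
`λ̄(P₀) = sup{ r ≥ 0 : B_r(P₀) ⊆ Ω₀ }` is continuous on `closure 𝒫₀`,
dominates `λ` on `𝒫₀`, and generates the same region `Ω₀`. -/
theorem stmt19 {s : ℕ} (X : Fin s → Type*) [∀ i, Fintype (X i)]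
    (α : Fin s → ℝ) (hα : ∀ i, 0 < α i)
    (𝒫₀ : Set (∀ i, X i → ℝ))
    (h₀prob : ∀ P ∈ closure 𝒫₀, ∀ i, IsProb (P i))
    (hbdd : ∃ δ > 0, ∀ P ∈ closure 𝒫₀, ∀ i, ∀ x, δ ≤ P i x)
    (lam : (∀ i, X i → ℝ) → ℝ)
    (hlampos : ∀ P ∈ 𝒫₀, 0 < lam P)
    (hlambdd : ∃ C : ℝ, ∀ P ∈ 𝒫₀, lam P ≤ C) :
    let D : Set (∀ i, X i → ℝ) := {Q | ∀ i, IsProb (Q i)}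
    let B : ℝ → (∀ i, X i → ℝ) → Set (∀ i, X i → ℝ) :=
      fun r P => {Q ∈ D | ∑ i, α i * KL (Q i) (P i) < r}
    (⋃ P ∈ 𝒫₀, B (lam P) P) ≠ D →
    let lambar : (∀ i, X i → ℝ) → ℝ :=
      fun P => sSup {r : ℝ | 0 ≤ r ∧ B r P ⊆ ⋃ P' ∈ 𝒫₀, B (lam P') P'}
    ContinuousOn lambar (closure 𝒫₀) ∧
    (∀ P ∈ 𝒫₀, lam P ≤ lambar P) ∧
    (⋃ P ∈ 𝒫₀, B (lambar P) P) = ⋃ P ∈ 𝒫₀, B (lam P) P := by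
  intro D B hne lambar
  obtain ⟨δ, hδ0, hδ⟩ := hbdd
  set g : (∀ i, X i → ℝ) → (∀ i, X i → ℝ) → ℝ :=
    fun Q P => ∑ i, α i * KL (Q i) (P i) with hg
  set C : Set (∀ i, X i → ℝ) := closure 𝒫₀ with hC
  have hCsub : C ⊆ D := fun P hP => h₀prob P hP
  have hPsub : 𝒫₀ ⊆ C := subset_closure
  -- membership in B
  have hmemB : ∀ r P Q, Q ∈ B r P ↔ Q ∈ D ∧ g Q P < r := fun r P Q => Iff.rfl
  -- D is closed
  have hDclosed : IsClosed D := by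
    have hD : D = ⋂ i, ((⋂ x, {Q : ∀ i, X i → ℝ | 0 ≤ Q i x}) ∩ {Q | ∑ x, Q i x = 1}) := by
      ext Q
      simp only [Set.mem_iInter, Set.mem_inter_iff, Set.mem_setOf_eq]
      exact ⟨fun h i => ⟨fun x => (h i).1 x, (h i).2⟩, fun h i => ⟨fun x => (h i).1 x, (h i).2⟩⟩
    rw [hD]
    refine isClosed_iInter fun i => ?_
    exact IsClosed.inter
      (isClosed_iInter fun x =>
        isClosed_le continuous_const ((continuous_apply x).comp (continuous_apply i)))
      (isClosed_eq
        (continuous_finset_sum _ fun x _ => (continuous_apply x).comp (continuous_apply i))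
        continuous_const)
  -- D is compact
  have hDcomp : IsCompact D := by
    have hbox : IsCompact (Set.pi Set.univ fun i : Fin s =>
        Set.pi Set.univ fun _ : X i => Set.Icc (0:ℝ) 1) :=
      isCompact_univ_pi fun i => isCompact_univ_pi fun _ => isCompact_Icc
    refine hbox.of_isClosed_subset hDclosed ?_
    intro Q hQ
    intro i _ x _
    refine ⟨(hQ i).1 x, ?_⟩
    calc Q i x ≤ ∑ y, Q i y :=
          Finset.single_le_sum (fun y _ => (hQ i).1 y) (Finset.mem_univ x)
      _ = 1 := (hQ i).2
  -- continuity of g in Q for fixed P ∈ C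
  have hgP : ∀ P ∈ C, Continuous (fun Q => g Q P) := by
    intro P hP
    rw [← continuousOn_univ]
    have := (aux_joint_cont X α).comp
      ((continuous_id.prodMk continuous_const).continuousOn
        (s := (Set.univ : Set (∀ i, X i → ℝ))))
      (fun Q _ => fun i x => ne_of_gt (lt_of_lt_of_le hδ0 (hδ P hP i x)))
    exact this
  -- Ω and the open set U
  set U : Set (∀ i, X i → ℝ) := ⋃ P ∈ 𝒫₀, {Q | g Q P < lam P} with hU
  have hUopen : IsOpen U :=
    isOpen_biUnion fun P hP => isOpen_lt (hgP P (hPsub hP)) continuous_const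
  have hΩeq : (⋃ P ∈ 𝒫₀, B (lam P) P) = D ∩ U := by
    ext Q
    simp only [Set.mem_iUnion, Set.mem_inter_iff, hU, Set.mem_setOf_eq]
    constructor
    · rintro ⟨P, hP, hQ⟩
      exact ⟨hQ.1, ⟨P, hP, hQ.2⟩⟩
    · rintro ⟨hQD, P, hP, hlt⟩
      exact ⟨P, hP, hQD, hlt⟩
  set K : Set (∀ i, X i → ℝ) := D \ U with hK
  have hKcomp : IsCompact K := hDcomp.of_isClosed_subset (hDclosed.sdiff hUopen) Set.diff_subset
  have hKne : K.Nonempty := by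
    by_contra h
    apply hne
    rw [hΩeq]
    rw [Set.not_nonempty_iff_eq_empty, Set.diff_eq_empty] at h
    exact Set.inter_eq_left.mpr h
  -- nonnegativity of g on D × C
  have hgnonneg : ∀ Q ∈ D, ∀ P ∈ C, 0 ≤ g Q P := by
    intro Q hQ P hP
    refine Finset.sum_nonneg fun i _ => mul_nonneg (hα i).le ?_
    exact aux_KL_nonneg (Q i) (P i) (hQ i) (h₀prob P hP i)
      (fun x => lt_of_lt_of_le hδ0 (hδ P hP i x))
  set f : (∀ i, X i → ℝ) → ℝ := fun P => sInf ((fun Q => g Q P) '' K) with hf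
  have hbddimg : ∀ P ∈ C, BddBelow ((fun Q => g Q P) '' K) := by
    rintro P hP
    exact ⟨0, by rintro b ⟨Q, hQ, rfl⟩; exact hgnonneg Q hQ.1 P hP⟩
  have hattain : ∀ P ∈ C, ∃ Q ∈ K, f P = g Q P := fun P hP =>
    hKcomp.exists_sInf_image_eq hKne (hgP P hP).continuousOn
  have hfnonneg : ∀ P ∈ C, 0 ≤ f P := by
    intro P hP
    obtain ⟨Q, hQ, hEq⟩ := hattain P hP
    rw [hEq]
    exact hgnonneg Q hQ.1 P hP
  -- the defining set of lambar is an interval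
  have hSet : ∀ P ∈ C, {r : ℝ | 0 ≤ r ∧ B r P ⊆ ⋃ P' ∈ 𝒫₀, B (lam P') P'}
      = Set.Icc 0 (f P) := by
    intro P hP
    ext r
    simp only [Set.mem_setOf_eq, Set.mem_Icc]
    constructor
    · rintro ⟨hr0, hrsub⟩
      refine ⟨hr0, le_csInf (hKne.image _) ?_⟩
      rintro b ⟨Q, hQK, rfl⟩
      by_contra hlt
      push_neg at hlt
      have hQΩ : Q ∈ ⋃ P' ∈ 𝒫₀, B (lam P') P' := hrsub ⟨hQK.1, hlt⟩
      rw [hΩeq] at hQΩ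
      exact hQK.2 hQΩ.2
    · rintro ⟨hr0, hrf⟩
      refine ⟨hr0, ?_⟩
      intro Q hQ
      rw [hΩeq]
      refine ⟨hQ.1, ?_⟩
      by_contra hQU
      have hQK : Q ∈ K := ⟨hQ.1, hQU⟩
      have : f P ≤ g Q P := csInf_le (hbddimg P hP) ⟨Q, hQK, rfl⟩
      have hlt : g Q P < r := hQ.2
      linarith
  have hlambar_eq : ∀ P ∈ C, lambar P = f P := by
    intro P hP
    show sSup _ = f P
    rw [hSet P hP, csSup_Icc (hfnonneg P hP)]
  -- continuity of f on C
  have hfcont : ContinuousOn f C := by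
    have hgcont : ContinuousOn (fun p : _ × _ => g p.1 p.2) (K ×ˢ C) := by
      refine (aux_joint_cont X α).mono ?_
      rintro ⟨Q, P⟩ ⟨_, hP⟩ i x
      exact ne_of_gt (lt_of_lt_of_le hδ0 (hδ P hP i x))
    have hunif := (hKcomp.prod (hDcomp.of_isClosed_subset isClosed_closure hCsub)).uniformContinuousOn_of_continuous hgcont
    rw [Metric.continuousOn_iff]
    intro P₀ hP₀ ε hε
    rw [Metric.uniformContinuousOn_iff] at hunif
    obtain ⟨d, hd0, hdprop⟩ := hunif ε hε
    refine ⟨d, hd0, fun P hP hdist => ?_⟩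
    have key : ∀ P₁ ∈ C, ∀ P₂ ∈ C, dist P₁ P₂ < d → f P₁ < f P₂ + ε := by
      intro P₁ hP₁ P₂ hP₂ hd12
      obtain ⟨Q₂, hQ₂, hEq₂⟩ := hattain P₂ hP₂
      have h1 : f P₁ ≤ g Q₂ P₁ := csInf_le (hbddimg P₁ hP₁) ⟨Q₂, hQ₂, rfl⟩
      have h2 : dist (g Q₂ P₁) (g Q₂ P₂) < ε := by
        have := hdprop (Q₂, P₁) (Set.mk_mem_prod hQ₂ hP₁) (Q₂, P₂) (Set.mk_mem_prod hQ₂ hP₂) ?_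
        · exact this
        · rw [Prod.dist_eq]
          simp only [dist_self]
          exact max_lt hd0 hd12
      rw [Real.dist_eq, abs_lt] at h2
      rw [hEq₂]
      linarith
    have k1 := key P hP P₀ hP₀ hdist
    have k2 := key P₀ hP₀ P hP (by rwa [dist_comm])
    rw [Real.dist_eq, abs_lt]
    constructor <;> linarith
  refine ⟨?_, ?_, ?_⟩
  · exact (hfcont.congr hlambar_eq)
  · intro P hP
    rw [hlambar_eq P (hPsub hP)]
    have : lam P ∈ Set.Icc 0 (f P) := by
      rw [← hSet P (hPsub hP)]
      exact ⟨(hlampos P hP).le, Set.subset_biUnion_of_mem (u := fun P' => B (lam P') P') hP⟩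
    exact this.2
  · rw [hΩeq]
    apply Set.Subset.antisymm
    · refine Set.iUnion₂_subset fun P hP Q hQ => ?_
      refine ⟨hQ.1, ?_⟩
      by_contra hQU
      have hQK : Q ∈ K := ⟨hQ.1, hQU⟩
      have h1 : f P ≤ g Q P := csInf_le (hbddimg P (hPsub hP)) ⟨Q, hQK, rfl⟩
      have h2 : g Q P < lambar P := hQ.2
      rw [hlambar_eq P (hPsub hP)] at h2
      linarith
    · rw [← hΩeq]
      refine Set.iUnion₂_subset fun P hP Q hQ => ?_
      refine Set.mem_biUnion hP ⟨hQ.1, lt_of_lt_of_le hQ.2 ?_⟩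
      rw [hlambar_eq P (hPsub hP)]
      have : lam P ∈ Set.Icc 0 (f P) := by
        rw [← hSet P (hPsub hP)]
        exact ⟨(hlampos P hP).le, Set.subset_biUnion_of_mem (u := fun P' => B (lam P') P') hP⟩
      exact this.2
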